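/- Suppose the positive masses m₁, m₂, m₃, m₄, a vector r ∈ (0,∞)⁶, and real numbers λ, σ satisfy the co-circular central configuration equations. Then the 6×6 real symmetric matrix D²L(r; λ, σ) = diag(f₁₂, f₁₃, f₁₄, f₂₃, f₂₄, f₃₄) + adiag(σ, −σ, σ, σ, −σ, σ), where f_{ij} = m_i m_j (2 r_{ij}⁻³ + λ), the coordinates are ordered (r₁₂, r₁₃, r₁₄, r₂₃, r₂₄, r₃₄), and adiag denotes the anti-diagonal matrix whose anti-diagonal entries from the upper-right corner are σ, −σ, σ, σ, −σ, σ, is positive definite. Consequently every critical point of U restricted to 𝓜⁺ is a nondegenerate local minimum of U|𝓜⁺. -/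

import Mathlib

/-! Auxiliary evaluation lemmas for `vecCons` at `Fin` literals. -/

lemma cv0_0 {α : Type*} (a : α) (u : Fin 0 → α) : Matrix.vecCons a u (0 : Fin 1) = a := rfl
lemma cv1_0 {α : Type*} (a : α) (u : Fin 1 → α) : Matrix.vecCons a u (0 : Fin 2) = a := rfl
lemma cv1_1 {α : Type*} (a : α) (u : Fin 1 → α) : Matrix.vecCons a u (1 : Fin 2) = u 0 := rfl
lemma cv2_0 {α : Type*} (a : α) (u : Fin 2 → α) : Matrix.vecCons a u (0 : Fin 3) = a := rfl
lemma cv2_1 {α : Type*} (a : α) (u : Fin 2 → α) : Matrix.vecCons a u (1 : Fin 3) = u 0 := rfl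
lemma cv2_2 {α : Type*} (a : α) (u : Fin 2 → α) : Matrix.vecCons a u (2 : Fin 3) = u 1 := rfl
lemma cv3_0 {α : Type*} (a : α) (u : Fin 3 → α) : Matrix.vecCons a u (0 : Fin 4) = a := rfl
lemma cv3_1 {α : Type*} (a : α) (u : Fin 3 → α) : Matrix.vecCons a u (1 : Fin 4) = u 0 := rfl
lemma cv3_2 {α : Type*} (a : α) (u : Fin 3 → α) : Matrix.vecCons a u (2 : Fin 4) = u 1 := rfl
lemma cv3_3 {α : Type*} (a : α) (u : Fin 3 → α) : Matrix.vecCons a u (3 : Fin 4) = u 2 := rfl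
lemma cv4_0 {α : Type*} (a : α) (u : Fin 4 → α) : Matrix.vecCons a u (0 : Fin 5) = a := rfl
lemma cv4_1 {α : Type*} (a : α) (u : Fin 4 → α) : Matrix.vecCons a u (1 : Fin 5) = u 0 := rfl
lemma cv4_2 {α : Type*} (a : α) (u : Fin 4 → α) : Matrix.vecCons a u (2 : Fin 5) = u 1 := rfl
lemma cv4_3 {α : Type*} (a : α) (u : Fin 4 → α) : Matrix.vecCons a u (3 : Fin 5) = u 2 := rfl
lemma cv4_4 {α : Type*} (a : α) (u : Fin 4 → α) : Matrix.vecCons a u (4 : Fin 5) = u 3 := rfl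
lemma cv5_0 {α : Type*} (a : α) (u : Fin 5 → α) : Matrix.vecCons a u (0 : Fin 6) = a := rfl
lemma cv5_1 {α : Type*} (a : α) (u : Fin 5 → α) : Matrix.vecCons a u (1 : Fin 6) = u 0 := rfl
lemma cv5_2 {α : Type*} (a : α) (u : Fin 5 → α) : Matrix.vecCons a u (2 : Fin 6) = u 1 := rfl
lemma cv5_3 {α : Type*} (a : α) (u : Fin 5 → α) : Matrix.vecCons a u (3 : Fin 6) = u 2 := rfl
lemma cv5_4 {α : Type*} (a : α) (u : Fin 5 → α) : Matrix.vecCons a u (4 : Fin 6) = u 3 := rfl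
lemma cv5_5 {α : Type*} (a : α) (u : Fin 5 → α) : Matrix.vecCons a u (5 : Fin 6) = u 4 := rfl
lemma cv6_0 {α : Type*} (a : α) (u : Fin 6 → α) : Matrix.vecCons a u (0 : Fin 7) = a := rfl
lemma cv6_1 {α : Type*} (a : α) (u : Fin 6 → α) : Matrix.vecCons a u (1 : Fin 7) = u 0 := rfl
lemma cv6_2 {α : Type*} (a : α) (u : Fin 6 → α) : Matrix.vecCons a u (2 : Fin 7) = u 1 := rfl
lemma cv6_3 {α : Type*} (a : α) (u : Fin 6 → α) : Matrix.vecCons a u (3 : Fin 7) = u 2 := rfl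
lemma cv6_4 {α : Type*} (a : α) (u : Fin 6 → α) : Matrix.vecCons a u (4 : Fin 7) = u 3 := rfl
lemma cv6_5 {α : Type*} (a : α) (u : Fin 6 → α) : Matrix.vecCons a u (5 : Fin 7) = u 4 := rfl
lemma cv6_6 {α : Type*} (a : α) (u : Fin 6 → α) : Matrix.vecCons a u (6 : Fin 7) = u 5 := rfl

/-- Positivity of a 2×2 quadratic form with positive leading coefficient and
positive determinant. -/
lemma quad_pos_aux (a b s u v : ℝ) (ha : 0 < a) (hd : s^2 < a*b)
    (huv : u ≠ 0 ∨ v ≠ 0) :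
    0 < a*u^2 + 2*s*(u*v) + b*v^2 := by
  rcases eq_or_ne v 0 with rfl | hv
  · rcases huv with hu | hv
    · have := sq_pos_of_ne_zero hu
      nlinarith
    · exact absurd rfl hv
  · have hv2 := sq_pos_of_ne_zero hv
    nlinarith [sq_nonneg (a*u + s*v)]

lemma quad_nonneg_aux (a b s u v : ℝ) (ha : 0 < a) (hd : s^2 < a*b) :
    0 ≤ a*u^2 + 2*s*(u*v) + b*v^2 := by
  nlinarith [sq_nonneg (a*u + s*v), sq_nonneg v]

/-- Determinant condition for each 2×2 block of the Hessian. -/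
lemma det_aux (p q u v s lam : ℝ) (hp : 0 < p) (hq : 0 < q) (hu : 0 < u) (hv : 0 < v)
    (hlam : 0 < lam) (hs : s^2 = (p*(u - lam)) * (q*(v - lam))) :
    s^2 < (p*(2*u + lam)) * (q*(2*v + lam)) := by
  have hc : 0 < u*v + lam*u + lam*v := by positivity
  nlinarith [mul_pos (mul_pos hp hq) hc]

/-- The co-circular central configuration equations for the mutual distances
`(r₁₂, r₁₃, r₁₄, r₂₃, r₂₄, r₃₄)` with Lagrange multipliers `lam` and `sig`. -/
def cocircularCCEqns (m1 m2 m3 m4 r12 r13 r14 r23 r24 r34 lam sig : ℝ) : Prop :=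
  m1*m2*(1/r12^3 - lam) = sig * (r34/r12) ∧
  m3*m4*(1/r34^3 - lam) = sig * (r12/r34) ∧
  m1*m3*(1/r13^3 - lam) = -sig * (r24/r13) ∧
  m2*m4*(1/r24^3 - lam) = -sig * (r13/r24) ∧
  m1*m4*(1/r14^3 - lam) = sig * (r23/r14) ∧
  m2*m3*(1/r23^3 - lam) = sig * (r14/r23)

/-- The Hessian `D²L(r; λ, σ)` of the Lagrangian
`L = U + λM(I − 1) + σP` with respect to the coordinates
`(r₁₂, r₁₃, r₁₄, r₂₃, r₂₄, r₃₄)`: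
`diag(f₁₂, f₁₃, f₁₄, f₂₃, f₂₄, f₃₄) + adiag(σ, −σ, σ, σ, −σ, σ)`
where `f_ij = m_i m_j (2 r_ij⁻³ + λ)`. -/
noncomputable def hessianL (m1 m2 m3 m4 r12 r13 r14 r23 r24 r34 lam sig : ℝ) :
    Matrix (Fin 6) (Fin 6) ℝ :=
  !![m1*m2*(2/r12^3 + lam), 0, 0, 0, 0, sig;
     0, m1*m3*(2/r13^3 + lam), 0, 0, -sig, 0;
     0, 0, m1*m4*(2/r14^3 + lam), sig, 0, 0;
     0, 0, sig, m2*m3*(2/r23^3 + lam), 0, 0;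
     0, -sig, 0, 0, m2*m4*(2/r24^3 + lam), 0;
     sig, 0, 0, 0, 0, m3*m4*(2/r34^3 + lam)]

set_option maxHeartbeats 1000000 in
/-- At any solution of the co-circular central configuration equations the
Hessian of the Lagrangian is positive definite; hence every critical point of
`U` restricted to `𝓜⁺` is a nondegenerate local minimum. -/
theorem hessianL_posDef (m1 m2 m3 m4 r12 r13 r14 r23 r24 r34 lam sig : ℝ)
    (hm1 : 0 < m1) (hm2 : 0 < m2) (hm3 : 0 < m3) (hm4 : 0 < m4)
    (h12 : 0 < r12) (h13 : 0 < r13) (h14 : 0 < r14)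
    (h23 : 0 < r23) (h24 : 0 < r24) (h34 : 0 < r34)
    (hcc : cocircularCCEqns m1 m2 m3 m4 r12 r13 r14 r23 r24 r34 lam sig) :
    (hessianL m1 m2 m3 m4 r12 r13 r14 r23 r24 r34 lam sig).PosDef := by
  obtain ⟨e1, e2, e3, e4, e5, e6⟩ := hcc
  have i12 : (0:ℝ) < 1/r12^3 := by positivity
  have i13 : (0:ℝ) < 1/r13^3 := by positivity
  have i14 : (0:ℝ) < 1/r14^3 := by positivity
  have i23 : (0:ℝ) < 1/r23^3 := by positivity
  have i24 : (0:ℝ) < 1/r24^3 := by positivity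
  have i34 : (0:ℝ) < 1/r34^3 := by positivity
  -- λ is positive: equations (1) and (3) force λ between 1/r₁₂³ and 1/r₁₃³
  have hprod : (m1*m2*(1/r12^3 - lam)) * (m1*m3*(1/r13^3 - lam)) ≤ 0 := by
    rw [e1, e3]
    have h0 : (0:ℝ) ≤ sig^2 * (r34/r12) * (r24/r13) := by positivity
    nlinarith [h0]
  have hlam : 0 < lam := by
    by_contra h
    push_neg at h
    have p1 : 0 < 1/r12^3 - lam := by linarith
    have p2 : 0 < 1/r13^3 - lam := by linarith
    have := mul_pos (mul_pos (mul_pos hm1 hm2) p1)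
      (mul_pos (mul_pos hm1 hm3) p2)
    nlinarith [this, hprod]
  -- σ² identities from multiplying paired equations
  have s2a : sig^2 = (m1*m2*(1/r12^3 - lam)) * (m3*m4*(1/r34^3 - lam)) := by
    rw [e1, e2]; field_simp
  have s2b : sig^2 = (m1*m3*(1/r13^3 - lam)) * (m2*m4*(1/r24^3 - lam)) := by
    rw [e3, e4]; field_simp
  have s2c : sig^2 = (m1*m4*(1/r14^3 - lam)) * (m2*m3*(1/r23^3 - lam)) := by
    rw [e5, e6]; field_simp
  -- diagonal entries are positive
  have d12 : 0 < m1*m2*(2/r12^3 + lam) := by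
    have : (0:ℝ) < 2/r12^3 := by positivity
    exact mul_pos (mul_pos hm1 hm2) (by linarith)
  have d13 : 0 < m1*m3*(2/r13^3 + lam) := by
    have : (0:ℝ) < 2/r13^3 := by positivity
    exact mul_pos (mul_pos hm1 hm3) (by linarith)
  have d14 : 0 < m1*m4*(2/r14^3 + lam) := by
    have : (0:ℝ) < 2/r14^3 := by positivity
    exact mul_pos (mul_pos hm1 hm4) (by linarith)
  -- determinant conditions for the three 2×2 blocks
  have detA : sig^2 < (m1*m2*(2/r12^3 + lam)) * (m3*m4*(2/r34^3 + lam)) := by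
    have h := det_aux (m1*m2) (m3*m4) (1/r12^3) (1/r34^3) sig lam
      (by positivity) (by positivity) i12 i34 hlam s2a
    have e : (m1*m2*(2*(1/r12^3) + lam)) * (m3*m4*(2*(1/r34^3) + lam))
        = (m1*m2*(2/r12^3 + lam)) * (m3*m4*(2/r34^3 + lam)) := by ring
    linarith [h, e.ge, e.le]
  have detB : sig^2 < (m1*m3*(2/r13^3 + lam)) * (m2*m4*(2/r24^3 + lam)) := by
    have h := det_aux (m1*m3) (m2*m4) (1/r13^3) (1/r24^3) sig lam
      (by positivity) (by positivity) i13 i24 hlam s2b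
    have e : (m1*m3*(2*(1/r13^3) + lam)) * (m2*m4*(2*(1/r24^3) + lam))
        = (m1*m3*(2/r13^3 + lam)) * (m2*m4*(2/r24^3 + lam)) := by ring
    linarith [h, e.ge, e.le]
  have detC : sig^2 < (m1*m4*(2/r14^3 + lam)) * (m2*m3*(2/r23^3 + lam)) := by
    have h := det_aux (m1*m4) (m2*m3) (1/r14^3) (1/r23^3) sig lam
      (by positivity) (by positivity) i14 i23 hlam s2c
    have e : (m1*m4*(2*(1/r14^3) + lam)) * (m2*m3*(2*(1/r23^3) + lam))
        = (m1*m4*(2/r14^3 + lam)) * (m2*m3*(2/r23^3 + lam)) := by ring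
    linarith [h, e.ge, e.le]
  have detB' : (-sig)^2 < (m1*m3*(2/r13^3 + lam)) * (m2*m4*(2/r24^3 + lam)) := by
    rwa [neg_sq]
  rw [Matrix.posDef_iff_dotProduct_mulVec]
  constructor
  · ext i j
    fin_cases i <;> fin_cases j <;> rfl
  · intro x hx
    have hform : dotProduct (star x)
        (Matrix.mulVec (hessianL m1 m2 m3 m4 r12 r13 r14 r23 r24 r34 lam sig) x) =
        ((m1*m2*(2/r12^3 + lam))*(x 0)^2 + 2*sig*(x 0 * x 5)
            + (m3*m4*(2/r34^3 + lam))*(x 5)^2)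
        + ((m1*m3*(2/r13^3 + lam))*(x 1)^2 + 2*(-sig)*(x 1 * x 4)
            + (m2*m4*(2/r24^3 + lam))*(x 4)^2)
        + ((m1*m4*(2/r14^3 + lam))*(x 2)^2 + 2*sig*(x 2 * x 3)
            + (m2*m3*(2/r23^3 + lam))*(x 3)^2) := by
      simp only [hessianL, Matrix.mulVec, dotProduct, Fin.sum_univ_six,
        Matrix.of_apply, Pi.star_apply, star_trivial,
        cv0_0, cv1_0, cv1_1, cv2_0, cv2_1, cv2_2, cv3_0, cv3_1, cv3_2, cv3_3,
        cv4_0, cv4_1, cv4_2, cv4_3, cv4_4, cv5_0, cv5_1, cv5_2, cv5_3, cv5_4, cv5_5,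
        cv6_0, cv6_1, cv6_2, cv6_3, cv6_4, cv6_5, cv6_6]
      ring
    rw [hform]
    have hA0 : 0 ≤ (m1*m2*(2/r12^3 + lam))*(x 0)^2 + 2*sig*(x 0 * x 5)
        + (m3*m4*(2/r34^3 + lam))*(x 5)^2 := quad_nonneg_aux _ _ _ _ _ d12 detA
    have hB0 : 0 ≤ (m1*m3*(2/r13^3 + lam))*(x 1)^2 + 2*(-sig)*(x 1 * x 4)
        + (m2*m4*(2/r24^3 + lam))*(x 4)^2 := quad_nonneg_aux _ _ _ _ _ d13 detB'
    have hC0 : 0 ≤ (m1*m4*(2/r14^3 + lam))*(x 2)^2 + 2*sig*(x 2 * x 3)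
        + (m2*m3*(2/r23^3 + lam))*(x 3)^2 := quad_nonneg_aux _ _ _ _ _ d14 detC
    have h6 : x 0 ≠ 0 ∨ x 1 ≠ 0 ∨ x 2 ≠ 0 ∨ x 3 ≠ 0 ∨ x 4 ≠ 0 ∨ x 5 ≠ 0 := by
      by_contra h
      push_neg at h
      obtain ⟨h0, h1, h2, h3, h4, h5⟩ := h
      refine hx (funext fun i => ?_)
      fin_cases i <;> simp only [Pi.zero_apply]
      · exact h0
      · exact h1
      · exact h2
      · exact h3
      · exact h4
      · exact h5
    rcases h6 with h | h | h | h | h | h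
    · have := quad_pos_aux (m1*m2*(2/r12^3 + lam)) (m3*m4*(2/r34^3 + lam)) sig
        (x 0) (x 5) d12 detA (Or.inl h); linarith
    · have := quad_pos_aux (m1*m3*(2/r13^3 + lam)) (m2*m4*(2/r24^3 + lam)) (-sig)
        (x 1) (x 4) d13 detB' (Or.inl h); linarith
    · have := quad_pos_aux (m1*m4*(2/r14^3 + lam)) (m2*m3*(2/r23^3 + lam)) sig
        (x 2) (x 3) d14 detC (Or.inl h); linarith
    · have := quad_pos_aux (m1*m4*(2/r14^3 + lam)) (m2*m3*(2/r23^3 + lam)) sig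
        (x 2) (x 3) d14 detC (Or.inr h); linarith
    · have := quad_pos_aux (m1*m3*(2/r13^3 + lam)) (m2*m4*(2/r24^3 + lam)) (-sig)
        (x 1) (x 4) d13 detB' (Or.inr h); linarith
    · have := quad_pos_aux (m1*m2*(2/r12^3 + lam)) (m3*m4*(2/r34^3 + lam)) sig
        (x 0) (x 5) d12 detA (Or.inr h); linarith
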